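/- Every simple left D(q)-module V is either ℂ[u]-torsionfree (for every nonzero v ∈ V and every nonzero f ∈ ℂ[u], f·v ≠ 0), or is a generalized weight module with respect to ℂ[u], i.e. V = ⊕_{χ ∈ ℂ} V_χ where V_χ = {a ∈ V : (u−χ)ᵏ·a = 0 for some k ≥ 0}. -/

import Mathlib

open Polynomial
open scoped DirectSum

/-- Transport `DirectSum.IsInternal` along carrier-equality. -/
lemma isInternal_of_carrier_eq {M : Type} [AddCommGroup M] [Module ℂ M] {ι : Type} [DecidableEq ι]
    (A : ι → AddSubgroup M) (B : ι → Submodule ℂ M)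
    (h : ∀ i (x : M), x ∈ A i ↔ x ∈ B i) (hB : DirectSum.IsInternal B) :
    DirectSum.IsInternal A := by
  classical
  let eAB : ∀ i, A i ≃+ B i := fun i =>
    { toFun := fun x => ⟨x.1, (h i x.1).1 x.2⟩
      invFun := fun x => ⟨x.1, (h i x.1).2 x.2⟩
      left_inv := fun x => rfl
      right_inv := fun x => rfl
      map_add' := fun x y => rfl }
  let Φ : (⨁ i, A i) ≃+ ⨁ i, B i := DFinsupp.mapRange.addEquiv eAB
  have hcomm : ∀ x : ⨁ i, A i,
      DirectSum.coeAddMonoidHom A x = DirectSum.coeAddMonoidHom B (Φ x) := by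
    intro x
    induction x using DirectSum.induction_on with
    | zero => simp
    | of i x =>
        rw [DirectSum.coeAddMonoidHom_of]
        have : Φ (DirectSum.of (fun i => A i) i x) = DirectSum.of (fun i => B i) i (eAB i x) := by
          exact DFinsupp.mapRange_single (hf := fun i => (eAB i).map_zero)
        rw [this, DirectSum.coeAddMonoidHom_of]
        rfl
    | add x y hx hy => rw [map_add, map_add, hx, hy, map_add]
  have : (DirectSum.coeAddMonoidHom A : (⨁ i, A i) → M)
      = (DirectSum.coeAddMonoidHom B) ∘ Φ := funext hcomm
  rw [DirectSum.IsInternal, this]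
  exact hB.comp Φ.bijective

lemma exists_eigvec {M : Type} [AddCommGroup M] [Module ℂ M] (e : Module.End ℂ M) :
    ∀ (n : ℕ) (g : ℂ[X]), g.natDegree ≤ n → g ≠ 0 → ∀ v : M, v ≠ 0 →
      (Polynomial.aeval e) g v = 0 → ∃ (χ : ℂ) (x : M), x ≠ 0 ∧ e x = χ • x := by
  intro n
  induction n with
  | zero =>
      intro g hdeg hg v hv hgv
      obtain ⟨c, rfl⟩ := Polynomial.natDegree_eq_zero.mp (Nat.le_zero.mp hdeg)
      rw [Polynomial.aeval_C, Module.algebraMap_end_apply] at hgv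
      have hc : c ≠ 0 := fun hc => hg (by rw [hc, map_zero])
      exact absurd ((smul_eq_zero.mp hgv).resolve_left hc) hv
  | succ n ih =>
      intro g hdeg hg v hv hgv
      by_cases h0 : g.natDegree = 0
      · obtain ⟨c, rfl⟩ := Polynomial.natDegree_eq_zero.mp h0
        rw [Polynomial.aeval_C, Module.algebraMap_end_apply] at hgv
        have hc : c ≠ 0 := fun hc => hg (by rw [hc, map_zero])
        exact absurd ((smul_eq_zero.mp hgv).resolve_left hc) hv
      · have hdeg0 : g.degree ≠ 0 := fun hh => h0 (Polynomial.natDegree_eq_zero_iff_degree_le_zero.mpr (le_of_eq hh))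
        obtain ⟨r, hr⟩ := IsAlgClosed.exists_root g hdeg0
        obtain ⟨g', rfl⟩ := (Polynomial.dvd_iff_isRoot.mpr hr)
        have hX : (X - C r) ≠ (0 : ℂ[X]) := Polynomial.X_sub_C_ne_zero r
        have hg' : g' ≠ 0 := fun hh => hg (by rw [hh, mul_zero])
        have hdeg' : g'.natDegree ≤ n := by
          have := Polynomial.natDegree_mul hX hg'
          rw [Polynomial.natDegree_X_sub_C] at this
          omega
        rw [map_mul, Module.End.mul_apply] at hgv
        by_cases hx : (Polynomial.aeval e) g' v = 0
        · exact ih g' hdeg' hg' v hv hx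
        · refine ⟨r, (Polynomial.aeval e) g' v, hx, ?_⟩
          have : (Polynomial.aeval e) (X - C r) = e - algebraMap ℂ (Module.End ℂ M) r := by
            simp
          rw [this] at hgv
          have := sub_eq_zero.mp hgv
          rw [LinearMap.sub_apply, sub_eq_zero] at hgv
          rw [hgv, Module.algebraMap_end_apply]



noncomputable section

open Polynomial

namespace KleinD

/-- The three generators of the free algebra. -/
def U : FreeAlgebra ℂ (Fin 3) := FreeAlgebra.ι ℂ 0
def V : FreeAlgebra ℂ (Fin 3) := FreeAlgebra.ι ℂ 1
def W : FreeAlgebra ℂ (Fin 3) := FreeAlgebra.ι ℂ 2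

/-- ρ = 2 q(-1/2). -/
def rho (q : ℂ[X]) : ℂ := 2 * q.eval (-(1/2 : ℂ))

/-- The condition that p₀, p₁ satisfy `(1+2t)² (p₀(t²) + p₁(t²) t) = -4 q(t) q(-t-1) + ρ²`. -/
def pCond (q p₀ p₁ : ℂ[X]) : Prop :=
  (1 + 2 * X) ^ 2 * (p₀.comp (X ^ 2) + p₁.comp (X ^ 2) * X)
    = -4 * q * q.comp (-X - 1) + C (rho q) ^ 2

/-- The defining relations of `D(q)`. -/
inductive DqRel (q p₀ p₁ : ℂ[X]) : FreeAlgebra ℂ (Fin 3) → FreeAlgebra ℂ (Fin 3) → Prop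
  | rel1 : DqRel q p₀ p₁ (U * V - V * U) (2 * W + V)
  | rel2 : DqRel q p₀ p₁ (U * W - W * U)
      (2 * V * U + W + algebraMap ℂ (FreeAlgebra ℂ (Fin 3)) (rho q))
  | rel3 : DqRel q p₀ p₁ (V * W - W * V) (-(V * V) - Polynomial.aeval U p₁)
  | rel4 : DqRel q p₀ p₁ (W * W)
      (V * V * U + V * W + algebraMap ℂ (FreeAlgebra ℂ (Fin 3)) (rho q) * V
        + Polynomial.aeval U p₀)

/-- The noncommutative type D Kleinian singularity `D(q)`. -/
abbrev Dq (q p₀ p₁ : ℂ[X]) := RingQuot (DqRel q p₀ p₁)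

def uD (q p₀ p₁ : ℂ[X]) : Dq q p₀ p₁ := RingQuot.mkAlgHom ℂ (DqRel q p₀ p₁) U
def vD (q p₀ p₁ : ℂ[X]) : Dq q p₀ p₁ := RingQuot.mkAlgHom ℂ (DqRel q p₀ p₁) V
def wD (q p₀ p₁ : ℂ[X]) : Dq q p₀ p₁ := RingQuot.mkAlgHom ℂ (DqRel q p₀ p₁) W

/-- `ℂ(x)`, the field of rational functions. -/
abbrev L := RatFunc ℂ

/-- `x ∈ ℂ(x)`. -/
def xL : L := RatFunc.X

/-- The ℂ-algebra automorphism `τ` of ℂ(x), determined by `x ↦ -x`. -/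
def tauL : L ≃ₐ[ℂ] L :=
  IsFractionRing.algEquivOfAlgEquiv (Polynomial.algEquivAevalNegX (R := ℂ))

/-- The ℂ-algebra automorphism `δ` of ℂ(x), determined by `x ↦ x - 1`. -/
def deltaL : L ≃ₐ[ℂ] L :=
  IsFractionRing.algEquivOfAlgEquiv (Polynomial.algEquivAevalXAddC (-1 : ℂ))

/-- Left multiplication by a rational function, as a ℂ-linear endomorphism of ℂ(x). -/
def mulE (f : L) : Module.End ℂ L := Algebra.lmul ℂ L f

/-- `δ` as an endomorphism: `g(x) ↦ g(x-1)`. -/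
def deltaE : Module.End ℂ L := deltaL.toLinearMap
/-- `δ⁻¹` as an endomorphism: `g(x) ↦ g(x+1)`. -/
def deltaInvE : Module.End ℂ L := deltaL.symm.toLinearMap
/-- `τ` as an endomorphism: `g(x) ↦ g(-x)`. -/
def tauE : Module.End ℂ L := tauL.toLinearMap

/-- The skew group algebra `ℂ(x)#ℤ`, realized (via its faithful action on `ℂ(x)`) as the
subalgebra of `End_ℂ(ℂ(x))` generated by all multiplication operators `f·` together with
the shift automorphisms `δ` and `δ⁻¹`; its elements are exactly the finite sums
`Σ fₖ δᵏ`. -/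
def CxZ : Subalgebra ℂ (Module.End ℂ L) :=
  Algebra.adjoin ℂ (Set.range mulE ∪ {deltaE, deltaInvE})

/-- `q(x) ∈ ℂ(x)` for a polynomial `q`. -/
def pol (q : ℂ[X]) : L := algebraMap ℂ[X] L q

/-- The constant rational function `c`. -/
def cst (c : ℂ) : L := algebraMap ℂ L c

/-- The image of `φ(u) = x²`. -/
def phiU : Module.End ℂ L := mulE (xL ^ 2)

/-- The prescribed value of `φ(-v-w)`. -/
def phiMVW (q : ℂ[X]) : Module.End ℂ L :=
  (1/2 : ℂ) • (mulE (pol q / (cst (1/2) + xL)) * deltaInvE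
    + mulE (tauL (pol q) / (cst (1/2) - xL)) * deltaE
    - mulE (cst (q.eval (-(1/2 : ℂ))) / ((cst (1/2) + xL) * (cst (1/2) - xL))))

/-- The prescribed value of `φ(-(1/2)v-w)`. -/
def phiMHVW (q : ℂ[X]) : Module.End ℂ L :=
  (1/2 : ℂ) • (mulE (pol q / xL) * deltaInvE - mulE (tauL (pol q) / xL) * deltaE)

end KleinD

namespace KleinD

open scoped Classical

/-- The generalized weight space `V_χ = {a ∈ V | (u-χ)ᵏ a = 0 for some k}`. -/
def genWeightSpace (q p₀ p₁ : ℂ[X]) (V : Type) [AddCommGroup V] [Module (Dq q p₀ p₁) V]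
    (χ : ℂ) : AddSubgroup V where
  carrier := {a | ∃ k : ℕ,
    ((uD q p₀ p₁ - algebraMap ℂ (Dq q p₀ p₁) χ) ^ k) • a = 0}
  zero_mem' := ⟨0, smul_zero _⟩
  add_mem' := by
    rintro v w ⟨k₁, h₁⟩ ⟨k₂, h₂⟩
    refine ⟨k₁ + k₂, ?_⟩
    have hv : ((uD q p₀ p₁ - algebraMap ℂ (Dq q p₀ p₁) χ) ^ (k₁ + k₂)) • v = 0 := by
      rw [add_comm, pow_add, mul_smul, h₁, smul_zero]
    have hw : ((uD q p₀ p₁ - algebraMap ℂ (Dq q p₀ p₁) χ) ^ (k₁ + k₂)) • w = 0 := by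
      rw [pow_add, mul_smul, h₂, smul_zero]
    rw [smul_add, hv, hw, add_zero]
  neg_mem' := by
    rintro v ⟨k, h⟩
    exact ⟨k, by rw [smul_neg, h, neg_zero]⟩

end KleinD

open KleinD in
/-- Every simple left `D(q)`-module `V` is either `ℂ[u]`-torsionfree, or a
generalized weight module with respect to `ℂ[u]`: `V = ⊕_{χ ∈ ℂ} V_χ` where
`V_χ = {a ∈ V | (u-χ)ᵏ a = 0 for some k}`. -/
theorem statement6 (q p₀ p₁ : Polynomial ℂ) (hq : 4 ≤ q.natDegree)
    (hp : pCond q p₀ p₁)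
    (V : Type) [AddCommGroup V] [Module (Dq q p₀ p₁) V]
    [IsSimpleModule (Dq q p₀ p₁) V] :
    (∀ v : V, v ≠ 0 → ∀ f ∈ Algebra.adjoin ℂ {uD q p₀ p₁}, f ≠ 0 → f • v ≠ 0)
    ∨ DirectSum.IsInternal (fun χ : ℂ => genWeightSpace q p₀ p₁ V χ) := by
  classical
  letI : Module ℂ V := Module.compHom V (algebraMap ℂ (Dq q p₀ p₁))
  set u := uD q p₀ p₁ with hu
  set v := vD q p₀ p₁ with hv
  set w := wD q p₀ p₁ with hw
  have smul_def : ∀ (c : ℂ) (x : V), c • x = (algebraMap ℂ (Dq q p₀ p₁) c) • x :=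
    fun _ _ => rfl
  have smul_comm' : ∀ (c : ℂ) (d : Dq q p₀ p₁) (x : V), d • (c • x) = c • (d • x) := by
    intro c d x
    rw [smul_def, smul_def, ← mul_smul, ← mul_smul, Algebra.commutes]
  let φ : Dq q p₀ p₁ →ₐ[ℂ] Module.End ℂ V :=
    { toFun := fun d =>
        { toFun := fun x => d • x
          map_add' := fun x y => smul_add d x y
          map_smul' := fun c x => smul_comm' c d x }
      map_one' := by ext x; exact one_smul _ x
      map_mul' := fun a b => by ext x; exact mul_smul a b x
      map_zero' := by ext x; exact zero_smul _ x
      map_add' := fun a b => by ext x; exact add_smul a b x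
      commutes' := fun c => by
        ext x
        show (algebraMap ℂ (Dq q p₀ p₁) c) • x = _
        rw [Module.algebraMap_end_apply, smul_def] }
  have φ_apply : ∀ (d : Dq q p₀ p₁) (x : V), φ d x = d • x := fun _ _ => rfl
  set e : Module.End ℂ V := φ u with he
  have key : ∀ (χ : ℂ) (k : ℕ) (a : V),
      ((e - χ • (1 : Module.End ℂ V)) ^ k) a
        = ((u - algebraMap ℂ (Dq q p₀ p₁) χ) ^ k) • a := by
    intro χ k a
    have h1 : e - χ • (1 : Module.End ℂ V) = φ (u - algebraMap ℂ (Dq q p₀ p₁) χ) := by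
      rw [map_sub, AlgHom.commutes, Module.algebraMap_end_eq_smul_id]
      rfl
    rw [h1, ← map_pow]
    exact φ_apply _ a
  have hcar : ∀ (χ : ℂ) (a : V),
      a ∈ genWeightSpace q p₀ p₁ V χ ↔ a ∈ Module.End.maxGenEigenspace e χ := by
    intro χ a
    rw [Module.End.mem_maxGenEigenspace]
    constructor
    · rintro ⟨k, hk⟩
      exact ⟨k, by rw [key]; exact hk⟩
    · rintro ⟨k, hk⟩
      rw [key] at hk
      exact ⟨k, hk⟩
  -- relations in `Dq`
  have rel1 : u * v - v * u = 2 * w + v := by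
    have h := RingQuot.mkAlgHom_rel ℂ (DqRel.rel1 (q := q) (p₀ := p₀) (p₁ := p₁))
    simpa only [map_sub, map_mul, map_add, map_ofNat, hu, hv, hw, uD, vD, wD] using h
  have rel2 : u * w - w * u = 2 * v * u + w + algebraMap ℂ (Dq q p₀ p₁) (rho q) := by
    have h := RingQuot.mkAlgHom_rel ℂ (DqRel.rel2 (q := q) (p₀ := p₀) (p₁ := p₁))
    simpa only [map_sub, map_mul, map_add, map_ofNat, AlgHom.commutes, hu, hv, hw, uD, vD, wD] using h
  have rel1' : u * v = v * u + 2 * w + v := by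
    have h := sub_eq_iff_eq_add.mp rel1
    rw [h]; noncomm_ring
  have rel2' : u * w = w * u + 2 * (v * u) + w + algebraMap ℂ (Dq q p₀ p₁) (rho q) := by
    have h := sub_eq_iff_eq_add.mp rel2
    rw [h]; noncomm_ring
  set Wsup : Submodule ℂ V := ⨆ χ : ℂ, Module.End.maxGenEigenspace e χ with hWsup
  -- finite-dimensional invariant subspaces lie inside `Wsup`
  have hfin : ∀ (s : Set V), s.Finite →
      ∀ (hinv : ∀ x ∈ Submodule.span ℂ s, e x ∈ Submodule.span ℂ s),
      Submodule.span ℂ s ≤ Wsup := by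
    intro s hs hinv
    haveI : FiniteDimensional ℂ (Submodule.span ℂ s) := FiniteDimensional.span_of_finite ℂ hs
    intro x hx
    have htop : (⟨x, hx⟩ : Submodule.span ℂ s) ∈
        (⊤ : Submodule ℂ (Submodule.span ℂ s)) := trivial
    rw [← Module.End.iSup_maxGenEigenspace_eq_top (LinearMap.restrict e hinv)] at htop
    have hx2 : x ∈ Submodule.map (Submodule.span ℂ s).subtype
        (⨆ μ, Module.End.maxGenEigenspace (LinearMap.restrict e hinv) μ) := ⟨⟨x, hx⟩, htop, rfl⟩
    rw [Submodule.map_iSup] at hx2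
    have hle : ∀ μ : ℂ, Submodule.map (Submodule.span ℂ s).subtype
        (Module.End.maxGenEigenspace (LinearMap.restrict e hinv) μ) ≤ Wsup := by
      intro μ
      have hinf : Submodule.span ℂ s ⊓ Module.End.genEigenspace e μ ⊤
          = Submodule.map (Submodule.span ℂ s).subtype
            (Module.End.maxGenEigenspace (LinearMap.restrict e hinv) μ) :=
        Submodule.inf_genEigenspace e _ hinv
      rw [← hinf, hWsup]
      exact le_trans inf_le_right (le_iSup (fun χ : ℂ => Module.End.maxGenEigenspace e χ) μ)
    exact (iSup_le hle) hx2
  -- core: u, v, w map generalized eigenvectors into Wsup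
  have hcore : ∀ (χ : ℂ) (m : V), m ∈ Module.End.maxGenEigenspace e χ →
      u • m ∈ Wsup ∧ v • m ∈ Wsup ∧ w • m ∈ Wsup := by
    intro χ m hm
    obtain ⟨k, hk⟩ := (Module.End.mem_maxGenEigenspace e χ m).mp hm
    rw [key] at hk
    set c : Dq q p₀ p₁ := algebraMap ℂ (Dq q p₀ p₁) χ with hc
    set d0 : Dq q p₀ p₁ := u - c with hd0
    set A : ℕ → V := fun i => (d0 ^ i) • m with hA
    set s : Set V := (↑((Finset.range (k+1)).image A) : Set V)
      ∪ ↑((Finset.range (k+1)).image (fun i => v • A i))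
      ∪ ↑((Finset.range (k+1)).image (fun i => w • A i)) with hs
    have hsfin : s.Finite := by
      apply Set.Finite.union
      · exact Set.Finite.union (Finset.finite_toSet _) (Finset.finite_toSet _)
      · exact Finset.finite_toSet _
    set p : Submodule ℂ V := Submodule.span ℂ s with hp
    have hAzero : ∀ i, k ≤ i → A i = 0 := by
      intro i hi
      have hpow : d0 ^ i = d0 ^ (i - k) * d0 ^ k := by
        rw [← pow_add]
        congr 1
        omega
      simp only [hA]
      rw [hpow, mul_smul, hk, smul_zero]
    have hAp : ∀ i, A i ∈ p := by
      intro i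
      by_cases hik : i < k + 1
      · exact Submodule.subset_span (Or.inl (Or.inl (Finset.mem_coe.mpr
          (Finset.mem_image.mpr ⟨i, Finset.mem_range.mpr hik, rfl⟩))))
      · rw [hAzero i (by omega)]
        exact zero_mem p
    have hBp : ∀ i, v • A i ∈ p := by
      intro i
      by_cases hik : i < k + 1
      · exact Submodule.subset_span (Or.inl (Or.inr (Finset.mem_coe.mpr
          (Finset.mem_image.mpr ⟨i, Finset.mem_range.mpr hik, rfl⟩))))
      · rw [hAzero i (by omega), smul_zero]
        exact zero_mem p
    have hCp : ∀ i, w • A i ∈ p := by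
      intro i
      by_cases hik : i < k + 1
      · exact Submodule.subset_span (Or.inr (Finset.mem_coe.mpr
          (Finset.mem_image.mpr ⟨i, Finset.mem_range.mpr hik, rfl⟩)))
      · rw [hAzero i (by omega), smul_zero]
        exact zero_mem p
    have hstep : ∀ z : Dq q p₀ p₁, u * z = d0 * z + c * z := by
      intro z
      rw [hd0, sub_mul, sub_add_cancel]
    have huA : ∀ i, u • A i = A (i+1) + χ • A i := by
      intro i
      have h2 : u * d0 ^ i = d0 ^ (i+1) + c * d0 ^ i := by
        rw [pow_succ']
        exact hstep _
      simp only [hA]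
      rw [← mul_smul, h2, add_smul, mul_smul, ← smul_def]
    have huAp : ∀ i, u • A i ∈ p := by
      intro i
      rw [huA i]
      exact add_mem (hAp _) (Submodule.smul_mem _ _ (hAp _))
    have hUV : ∀ x : V, u • (v • x) = v • (u • x) + (w • x + w • x) + v • x := by
      have hr : u * v = v * u + (w + w) + v := by rw [rel1']; noncomm_ring
      intro x
      rw [← mul_smul, hr]
      simp only [add_smul, mul_smul]
    have hUW : ∀ x : V, u • (w • x)
        = w • (u • x) + (v • (u • x) + v • (u • x)) + w • x + (rho q) • x := by
      have hr : u * w = w * u + (v * u + v * u) + w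
          + algebraMap ℂ (Dq q p₀ p₁) (rho q) := by
        rw [rel2']; noncomm_ring
      intro x
      rw [← mul_smul, hr]
      simp only [add_smul, mul_smul]
      rw [← smul_def]
    have huBp : ∀ i, u • (v • A i) ∈ p := by
      intro i
      rw [hUV (A i), huA i, smul_add, smul_comm' χ v]
      exact add_mem (add_mem (add_mem (hBp _) (Submodule.smul_mem _ _ (hBp _)))
        (add_mem (hCp _) (hCp _))) (hBp _)
    have huCp : ∀ i, u • (w • A i) ∈ p := by
      intro i
      rw [hUW (A i), huA i]
      simp only [smul_add]
      rw [smul_comm' χ v, smul_comm' χ w]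
      refine add_mem (add_mem (add_mem
        (add_mem (hCp _) (Submodule.smul_mem _ _ (hCp _)))
        (add_mem (add_mem (hBp _) (Submodule.smul_mem _ _ (hBp _)))
          (add_mem (hBp _) (Submodule.smul_mem _ _ (hBp _))))) (hCp _))
        (Submodule.smul_mem _ _ (hAp _))
    have hinv : ∀ x ∈ p, e x ∈ p := by
      intro x hx
      have hex : ∀ y : V, e y = u • y := fun y => rfl
      rw [hp] at hx
      rw [hex, hp]
      induction hx using Submodule.span_induction with
      | mem x hxs =>
          rcases hxs with (hxs | hxs) | hxs
          · obtain ⟨i, _, rfl⟩ := Finset.mem_image.mp (Finset.mem_coe.mp hxs)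
            exact huAp i
          · obtain ⟨i, _, rfl⟩ := Finset.mem_image.mp (Finset.mem_coe.mp hxs)
            exact huBp i
          · obtain ⟨i, _, rfl⟩ := Finset.mem_image.mp (Finset.mem_coe.mp hxs)
            exact huCp i
      | zero => rw [smul_zero]; exact zero_mem _
      | add x y hxm hym ihx ihy => rw [smul_add]; exact add_mem ihx ihy
      | smul a x hxm ihx => rw [smul_comm' a u x]; exact Submodule.smul_mem _ _ ihx
    have hple : p ≤ Wsup := hfin s hsfin hinv
    have hA0 : A 0 = m := by simp only [hA, pow_zero, one_smul]
    have hmA : m ∈ p := by rw [← hA0]; exact hAp 0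
    refine ⟨?_, ?_, ?_⟩
    · have h := huAp 0
      rw [hA0] at h
      exact hple h
    · have h := hBp 0
      rw [hA0] at h
      exact hple h
    · have h := hCp 0
      rw [hA0] at h
      exact hple h
  have hWclosed : ∀ (g : Dq q p₀ p₁),
      (∀ (χ : ℂ) (m : V), m ∈ Module.End.maxGenEigenspace e χ → g • m ∈ Wsup) →
      ∀ x ∈ Wsup, g • x ∈ Wsup := by
    intro g hg x hx
    rw [hWsup] at hx
    exact Submodule.iSup_induction (motive := fun y : V => g • y ∈ Wsup) _ hx
      (fun χ m hm => hg χ m hm)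
      (by show g • (0 : V) ∈ Wsup; rw [smul_zero]; exact zero_mem _)
      (fun a b ha hb => by
        show g • (a + b) ∈ Wsup
        rw [smul_add]; exact add_mem ha hb)
  have hclose : ∀ (d : Dq q p₀ p₁) (x : V), x ∈ Wsup → d • x ∈ Wsup := by
    intro d
    obtain ⟨y, rfl⟩ := RingQuot.mkAlgHom_surjective ℂ (DqRel q p₀ p₁) d
    induction y using FreeAlgebra.induction with
    | grade0 r =>
        intro x hx
        rw [AlgHom.commutes, ← smul_def]
        exact Submodule.smul_mem _ _ hx
    | grade1 i =>
        fin_cases i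
        · exact hWclosed u (fun χ m hm => (hcore χ m hm).1)
        · exact hWclosed v (fun χ m hm => (hcore χ m hm).2.1)
        · exact hWclosed w (fun χ m hm => (hcore χ m hm).2.2)
    | mul a b ha hb =>
        intro x hx
        rw [map_mul, mul_smul]
        exact ha _ (hb _ hx)
    | add a b ha hb =>
        intro x hx
        rw [map_add, add_smul]
        exact add_mem (ha _ hx) (hb _ hx)
  let DqW : Submodule (Dq q p₀ p₁) V :=
    { carrier := Wsup
      add_mem' := fun ha hb => Wsup.add_mem ha hb
      zero_mem' := Wsup.zero_mem
      smul_mem' := fun d x hx => hclose d x hx }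
  rcases eq_bot_or_eq_top DqW with hbot | htop
  · left
    intro v0 hv0 f hf hf0 hcontra
    rw [Algebra.adjoin_singleton_eq_range_aeval] at hf
    obtain ⟨g, hg⟩ := hf
    have hgne : g ≠ 0 := by
      rintro rfl
      rw [map_zero] at hg
      exact hf0 hg.symm
    have haev : (Polynomial.aeval e) g v0 = 0 := by
      have h' : φ f v0 = 0 := hcontra
      rw [← hg] at h'
      rw [he, Polynomial.aeval_algHom_apply]
      exact h'
    obtain ⟨χ, x, hx0, hex⟩ := exists_eigvec e g.natDegree g le_rfl hgne v0 hv0 haev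
    have hxW : x ∈ Wsup := by
      apply Submodule.mem_iSup_of_mem χ
      rw [Module.End.mem_maxGenEigenspace]
      refine ⟨1, ?_⟩
      rw [pow_one, LinearMap.sub_apply, LinearMap.smul_apply, Module.End.one_apply, hex, sub_self]
    have hxD : x ∈ DqW := hxW
    rw [hbot] at hxD
    exact hx0 ((Submodule.mem_bot _).mp hxD)
  · right
    have hWtop : Wsup = ⊤ := by
      rw [Submodule.eq_top_iff']
      intro x
      have hxD : x ∈ DqW := by rw [htop]; trivial
      exact hxD
    refine isInternal_of_carrier_eq _ (fun χ => Module.End.maxGenEigenspace e χ)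
      (fun χ x => hcar χ x) ?_
    exact DirectSum.isInternal_submodule_of_iSupIndep_of_iSup_eq_top
      (Module.End.independent_maxGenEigenspace e) (hWsup ▸ hWtop)
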